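/- Let J be a positive integer and let x_1,…,x_J be positive real numbers with x_1 ⋯ x_J = 1. Then, reading indices modulo J, Σ_{t=1}^J 1 / ( Σ_{i=1}^J x_{t+1} x_{t+2} ⋯ x_{t+i} ) = 1. Equivalently, the average over the J cyclic permutations of (x_1,…,x_J) of the quantity ( Σ_{i=1}^J x_1 ⋯ x_i )^{-1} is exactly 1/J. -/

import Mathlib

open scoped BigOperators

noncomputable section

open Fin.NatCast

theorem cycle_lemma (J : ℕ) (hJ : 0 < J) (x : Fin J → ℝ)
    (hx : ∀ i, 0 < x i) (hprod : ∏ i, x i = 1) :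
    ∑ t : Fin J,
        (∑ i ∈ Finset.range J,
          ∏ l ∈ Finset.range (i + 1), x ⟨((t : ℕ) + (l + 1)) % J, Nat.mod_lt _ hJ⟩)⁻¹ = 1 := by
  haveI : NeZero J := ⟨hJ.ne'⟩
  set f : ℕ → Fin J := fun n => ⟨n % J, Nat.mod_lt _ hJ⟩ with hf
  have hfcast : ∀ n : ℕ, f n = (n : Fin J) := by
    intro n; ext; simp [hf, Fin.val_natCast]
  set P : ℕ → ℝ := fun n => ∏ l ∈ Finset.range n, x (f l) with hP
  have hPpos : ∀ n, 0 < P n := fun n => Finset.prod_pos fun l _ => hx _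
  have hPadd : ∀ n, P (n + J) = P n := by
    intro n
    have h1 : P (n + J) = P n * ∏ l ∈ Finset.range J, x (f (n + l)) := by
      simp [hP, Finset.prod_range_add]
    have h2 : ∏ l ∈ Finset.range J, x (f (n + l)) = ∏ i, x i := by
      rw [← Fin.prod_univ_eq_prod_range (fun l => x (f (n + l))) J]
      refine Fintype.prod_equiv (Equiv.addLeft (n : Fin J)) _ _ fun i => ?_
      congr 1
      rw [hfcast]
      push_cast [Fin.cast_val_eq_self]
      rfl
    rw [h1, h2, hprod, mul_one]
  have hPmod : ∀ n, P n = P (n % J) := by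
    intro n
    induction n using Nat.strong_induction_on with
    | _ n ih =>
      rcases lt_or_ge n J with h | h
      · rw [Nat.mod_eq_of_lt h]
      · obtain ⟨m, rfl⟩ : ∃ m, n = m + J := ⟨n - J, (Nat.sub_add_cancel h).symm⟩
        rw [hPadd, Nat.add_mod_right]
        exact ih m (by omega)
  set T : ℝ := ∑ i ∈ Finset.range J, P i with hT
  have hTpos : 0 < T := Finset.sum_pos (fun i _ => hPpos i) ⟨0, Finset.mem_range.2 hJ⟩
  have hshift : ∀ c : ℕ, ∑ i ∈ Finset.range J, P (c + i) = T := by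
    intro c
    have key : ∀ i : ℕ, P (c + i) = P ((((c : Fin J) + (i : Fin J)) : Fin J) : ℕ) := by
      intro i
      rw [hPmod (c + i)]
      congr 1
      simp [Fin.add_def, Fin.val_natCast, Nat.add_mod]
    calc ∑ i ∈ Finset.range J, P (c + i)
        = ∑ i : Fin J, P ((((c : Fin J) + i) : Fin J) : ℕ) := by
          rw [← Fin.sum_univ_eq_sum_range (fun i => P (c + i)) J]
          refine Finset.sum_congr rfl fun i _ => ?_
          rw [key i.val, Fin.cast_val_eq_self]
      _ = ∑ j : Fin J, P (j : ℕ) :=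
          Fintype.sum_equiv (Equiv.addLeft ((c : Fin J))) _ _ fun i => rfl
      _ = T := Fin.sum_univ_eq_sum_range (fun i => P i) J
  have hinner : ∀ t : Fin J,
      (∑ i ∈ Finset.range J,
        ∏ l ∈ Finset.range (i + 1), x ⟨((t : ℕ) + (l + 1)) % J, Nat.mod_lt _ hJ⟩)
        = T / P ((t : ℕ) + 1) := by
    intro t
    have hterm : ∀ i ∈ Finset.range J,
        ∏ l ∈ Finset.range (i + 1), x ⟨((t : ℕ) + (l + 1)) % J, Nat.mod_lt _ hJ⟩
          = P ((t : ℕ) + 1 + (i + 1)) / P ((t : ℕ) + 1) := by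
      intro i _
      have h1 : P ((t : ℕ) + 1 + (i + 1))
          = P ((t : ℕ) + 1) * ∏ l ∈ Finset.range (i + 1), x (f ((t : ℕ) + 1 + l)) := by
        simp [hP, Finset.prod_range_add]
      rw [h1, mul_comm, mul_div_assoc, div_self (hPpos _).ne', mul_one]
      refine Finset.prod_congr rfl fun l _ => ?_
      congr 1
      apply Fin.ext
      show ((t : ℕ) + (l + 1)) % J = ((t : ℕ) + 1 + l) % J
      congr 1
      omega
    rw [Finset.sum_congr rfl hterm, ← Finset.sum_div]
    congr 1
    have h2 := hshift ((t : ℕ) + 2)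
    rw [← h2]
    refine Finset.sum_congr rfl fun i _ => ?_
    congr 1
    omega
  have hsum1 : ∑ t : Fin J, P ((t : ℕ) + 1) = T := by
    have h3 := hshift 1
    rw [← h3, ← Fin.sum_univ_eq_sum_range (fun i => P (1 + i)) J]
    exact Finset.sum_congr rfl fun t _ => by rw [add_comm]
  calc ∑ t : Fin J, (∑ i ∈ Finset.range J,
          ∏ l ∈ Finset.range (i + 1), x ⟨((t : ℕ) + (l + 1)) % J, Nat.mod_lt _ hJ⟩)⁻¹
      = ∑ t : Fin J, P ((t : ℕ) + 1) / T := by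
        refine Finset.sum_congr rfl fun t _ => ?_
        rw [hinner t, inv_div]
    _ = 1 := by rw [← Finset.sum_div, hsum1, div_self hTpos.ne']
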